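/- arXiv:2508.18392 — 8 statements merged into one kernel-verified Lean document; each statement's English description precedes it below -/
import Mathlib

section
/- Let L be a finite nonempty index set, and for each ℓ ∈ L let q_ℓ > 0 and δ_ℓ ≥ 0, and suppose M = max_{ℓ∈L} δ_ℓ/q_ℓ > 0. Then the function Ξ(ζ) = Σ_{ℓ∈L} P_{[0,δ_ℓ]}(q_ℓ·(1−ζ)) is strictly decreasing on the interval [1 − M, 1]; that is, for all ζ₁ < ζ₂ in [1 − M, 1], Ξ(ζ₁) > Ξ(ζ₂). -/
/-- The clamp (projection) of `x` onto the interval `[a, b]`. -/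
noncomputable def clamp (a b x : ℝ) : ℝ := max a (min b x)

lemma clamp_mono (a b : ℝ) {x y : ℝ} (h : x ≤ y) : clamp a b x ≤ clamp a b y :=
  max_le_max le_rfl (min_le_min le_rfl h)

/-- If `M = max_ℓ δ ℓ / q ℓ > 0`, then
`Ξ ζ = ∑ ℓ, P_{[0, δ ℓ]} (q ℓ * (1 - ζ))` is strictly decreasing on `[1 - M, 1]`. -/
theorem stmt1 {L : Type*} [Fintype L] [Nonempty L]
    (q δ : L → ℝ) (hq : ∀ ℓ, 0 < q ℓ) (hδ : ∀ ℓ, 0 ≤ δ ℓ)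
    (hM : 0 < Finset.univ.sup' Finset.univ_nonempty (fun ℓ => δ ℓ / q ℓ)) :
    ∀ ζ₁ ζ₂ : ℝ,
      1 - Finset.univ.sup' Finset.univ_nonempty (fun ℓ => δ ℓ / q ℓ) ≤ ζ₁ → ζ₁ < ζ₂ → ζ₂ ≤ 1 →
      (∑ ℓ, clamp 0 (δ ℓ) (q ℓ * (1 - ζ₂))) < ∑ ℓ, clamp 0 (δ ℓ) (q ℓ * (1 - ζ₁)) := by
  intro ζ₁ ζ₂ h1 h12 h2
  obtain ⟨ℓ₀, -, hℓ₀⟩ := Finset.exists_mem_eq_sup' Finset.univ_nonempty (fun ℓ => δ ℓ / q ℓ)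
  rw [hℓ₀] at h1
  refine Finset.sum_lt_sum
    (fun i _ => clamp_mono _ _ (mul_le_mul_of_nonneg_left (by linarith) (hq i).le))
    ⟨ℓ₀, Finset.mem_univ ℓ₀, ?_⟩
  have hx2 : 0 ≤ q ℓ₀ * (1 - ζ₂) := mul_nonneg (hq ℓ₀).le (by linarith)
  have hx12 : q ℓ₀ * (1 - ζ₂) < q ℓ₀ * (1 - ζ₁) :=
    mul_lt_mul_of_pos_left (by linarith) (hq ℓ₀)
  have hx1 : q ℓ₀ * (1 - ζ₁) ≤ δ ℓ₀ := by
    calc q ℓ₀ * (1 - ζ₁) ≤ q ℓ₀ * (δ ℓ₀ / q ℓ₀) :=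
          mul_le_mul_of_nonneg_left (by linarith) (hq ℓ₀).le
      _ = δ ℓ₀ := by rw [mul_comm, div_mul_cancel₀ _ (hq ℓ₀).ne']
  have h1' : clamp 0 (δ ℓ₀) (q ℓ₀ * (1 - ζ₁)) = q ℓ₀ * (1 - ζ₁) := by
    simp [clamp, min_eq_right hx1, max_eq_right (le_trans hx2 hx12.le)]
  have h2' : clamp 0 (δ ℓ₀) (q ℓ₀ * (1 - ζ₂)) ≤ q ℓ₀ * (1 - ζ₂) :=
    max_le hx2 (min_le_right _ _)
  linarith
end

section
/- Let L be a finite nonempty index set, for each ℓ ∈ L let q_ℓ > 0 and δ_ℓ ≥ 0 with M = max_{ℓ∈L} δ_ℓ/q_ℓ > 0, and let σ ≥ 0. Then there exists a unique ζ in the interval [1 − M, 1] such that Σ_{ℓ∈L} P_{[0,δ_ℓ]}(q_ℓ·(1−ζ)) = min(σ, Σ_{ℓ∈L} δ_ℓ). -/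
lemma clamp_mono_s2 (a b : ℝ) : Monotone (clamp a b) := fun x y h => by
  unfold clamp
  exact max_le_max le_rfl (min_le_min le_rfl h)

/-- If `M = max_ℓ δ ℓ / q ℓ > 0` and `σ ≥ 0`, then there is a unique
`ζ ∈ [1 - M, 1]` with `∑ ℓ, P_{[0, δ ℓ]} (q ℓ * (1 - ζ)) = min σ (∑ ℓ, δ ℓ)`. -/
theorem stmt2 {L : Type*} [Fintype L] [Nonempty L]
    (q δ : L → ℝ) (hq : ∀ ℓ, 0 < q ℓ) (hδ : ∀ ℓ, 0 ≤ δ ℓ)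
    (hM : 0 < Finset.univ.sup' Finset.univ_nonempty (fun ℓ => δ ℓ / q ℓ))
    (σ : ℝ) (hσ : 0 ≤ σ) :
    ∃! ζ : ℝ,
      ζ ∈ Set.Icc (1 - Finset.univ.sup' Finset.univ_nonempty (fun ℓ => δ ℓ / q ℓ)) 1 ∧
      (∑ ℓ, clamp 0 (δ ℓ) (q ℓ * (1 - ζ))) = min σ (∑ ℓ, δ ℓ) := by
  set M := Finset.univ.sup' Finset.univ_nonempty (fun ℓ => δ ℓ / q ℓ) with hMdef
  set f : ℝ → ℝ := fun ζ => ∑ ℓ, clamp 0 (δ ℓ) (q ℓ * (1 - ζ)) with hfdef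
  obtain ⟨ℓ₀, -, hℓ₀⟩ := Finset.exists_mem_eq_sup' Finset.univ_nonempty
      (fun ℓ => δ ℓ / q ℓ)
  have hqM : ∀ ℓ, δ ℓ ≤ q ℓ * M := by
    intro ℓ
    have : δ ℓ / q ℓ ≤ M := by
      rw [hMdef]; exact Finset.le_sup' (fun ℓ => δ ℓ / q ℓ) (Finset.mem_univ ℓ)
    rw [div_le_iff₀ (hq ℓ)] at this
    linarith [this]
  have hδℓ₀ : q ℓ₀ * M = δ ℓ₀ := by
    rw [hMdef, hℓ₀, mul_comm, div_mul_eq_mul_div, mul_div_assoc,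
      div_self (hq ℓ₀).ne', mul_one]
  -- f (1 - M) = ∑ δ
  have hfleft : f (1 - M) = ∑ ℓ, δ ℓ := by
    apply Finset.sum_congr rfl
    intro ℓ _
    have h1 : (1 : ℝ) - (1 - M) = M := by ring
    rw [h1]
    unfold clamp
    rw [min_eq_left (hqM ℓ), max_eq_right (hδ ℓ)]
  -- f 1 = 0
  have hfright : f 1 = 0 := by
    apply Finset.sum_eq_zero
    intro ℓ _
    simp [clamp, hδ ℓ]
  -- strict anti on Icc
  have hsa : StrictAntiOn f (Set.Icc (1 - M) 1) := by
    intro x hx y hy hxy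
    apply Finset.sum_lt_sum
    · intro ℓ _
      exact clamp_mono_s2 0 (δ ℓ) (by nlinarith [hq ℓ])
    · refine ⟨ℓ₀, Finset.mem_univ _, ?_⟩
      have hid : ∀ z ∈ Set.Icc (1 - M) 1, clamp 0 (δ ℓ₀) (q ℓ₀ * (1 - z))
          = q ℓ₀ * (1 - z) := by
        intro z hz
        have h1 : 0 ≤ q ℓ₀ * (1 - z) := by nlinarith [hq ℓ₀, hz.2]
        have h2 : q ℓ₀ * (1 - z) ≤ δ ℓ₀ := by nlinarith [hq ℓ₀, hz.1]
        unfold clamp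
        rw [min_eq_right h2, max_eq_right h1]
      rw [hid x hx, hid y hy]
      nlinarith [hq ℓ₀]
  -- continuity
  have hcont : Continuous f := by
    apply continuous_finset_sum
    intro ℓ _
    unfold clamp
    fun_prop
  -- target
  set t := min σ (∑ ℓ, δ ℓ) with htdef
  have ht0 : 0 ≤ t := le_min hσ (Finset.sum_nonneg fun ℓ _ => hδ ℓ)
  have ht1 : t ≤ ∑ ℓ, δ ℓ := min_le_right _ _
  have hle : (1 : ℝ) - M ≤ 1 := by linarith
  have hmem : t ∈ Set.Icc (f 1) (f (1 - M)) := by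
    rw [hfright, hfleft]; exact ⟨ht0, ht1⟩
  obtain ⟨ζ, hζmem, hζeq⟩ := intermediate_value_Icc' hle hcont.continuousOn hmem
  refine ⟨ζ, ⟨hζmem, hζeq⟩, ?_⟩
  intro y ⟨hymem, hyeq⟩
  exact hsa.injOn hymem hζmem (hyeq.trans hζeq.symm)
end

section
/- Let L be a finite nonempty index set, for each ℓ ∈ L let q_ℓ > 0 and δ_ℓ ≥ 0, and let ℓ* ∈ L attain M = max_{ℓ∈L} δ_ℓ/q_ℓ > 0. For y ∈ [0, Σ_{ℓ∈L} δ_ℓ], let ζ(y) denote the unique point of [1 − M, 1] with Ξ(ζ(y)) = y, where Ξ(ζ) = Σ_{ℓ∈L} P_{[0,δ_ℓ]}(q_ℓ·(1−ζ)). Then the map y ↦ ζ(y) is Lipschitz continuous on [0, Σ_{ℓ∈L} δ_ℓ] with Lipschitz constant 1/q_{ℓ*}; that is, |ζ(y₁) − ζ(y₂)| ≤ |y₁ − y₂| / q_{ℓ*} for all y₁, y₂ in this interval. -/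
lemma clamp_eq (a b x : ℝ) (h1 : a ≤ x) (h2 : x ≤ b) : clamp a b x = x := by
  unfold clamp
  rw [min_eq_right h2, max_eq_right h1]

/-- Let `ℓ*` attain `M = max_ℓ δ ℓ / q ℓ > 0`, and for each
`y ∈ [0, ∑ ℓ, δ ℓ]` let `ζ y` be the unique point of `[1 - M, 1]` with `Ξ (ζ y) = y`.
Then `y ↦ ζ y` is Lipschitz on `[0, ∑ ℓ, δ ℓ]` with constant `1 / q ℓ*`. -/
theorem stmt3 {L : Type*} [Fintype L] [Nonempty L]
    (q δ : L → ℝ) (hq : ∀ ℓ, 0 < q ℓ) (hδ : ∀ ℓ, 0 ≤ δ ℓ)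
    (ℓstar : L) (hmax : ∀ ℓ, δ ℓ / q ℓ ≤ δ ℓstar / q ℓstar)
    (hMpos : 0 < δ ℓstar / q ℓstar)
    (ζ : ℝ → ℝ)
    (hζ : ∀ y ∈ Set.Icc (0 : ℝ) (∑ ℓ, δ ℓ),
      ζ y ∈ Set.Icc (1 - δ ℓstar / q ℓstar) 1 ∧
      (∑ ℓ, clamp 0 (δ ℓ) (q ℓ * (1 - ζ y))) = y) :
    ∀ y₁ ∈ Set.Icc (0 : ℝ) (∑ ℓ, δ ℓ), ∀ y₂ ∈ Set.Icc (0 : ℝ) (∑ ℓ, δ ℓ),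
      |ζ y₁ - ζ y₂| ≤ |y₁ - y₂| / q ℓstar := by
  have hq0 := hq ℓstar
  have hqM : q ℓstar * (δ ℓstar / q ℓstar) = δ ℓstar := by
    field_simp
  -- key lemma
  have key : ∀ y₁ ∈ Set.Icc (0 : ℝ) (∑ ℓ, δ ℓ), ∀ y₂ ∈ Set.Icc (0 : ℝ) (∑ ℓ, δ ℓ),
      ζ y₁ ≤ ζ y₂ → q ℓstar * (ζ y₂ - ζ y₁) ≤ y₁ - y₂ := by
    intro y₁ hy₁ y₂ hy₂ hle
    obtain ⟨⟨hz1l, hz1u⟩, hΞ1⟩ := hζ y₁ hy₁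
    obtain ⟨⟨hz2l, hz2u⟩, hΞ2⟩ := hζ y₂ hy₂
    have main : q ℓstar * (ζ y₂ - ζ y₁) ≤
        ∑ ℓ, (clamp 0 (δ ℓ) (q ℓ * (1 - ζ y₁)) - clamp 0 (δ ℓ) (q ℓ * (1 - ζ y₂))) := ?_
    · rw [Finset.sum_sub_distrib, hΞ1, hΞ2] at main; linarith
    have hstar : ∀ z : ℝ, 1 - δ ℓstar / q ℓstar ≤ z → z ≤ 1 →
        clamp 0 (δ ℓstar) (q ℓstar * (1 - z)) = q ℓstar * (1 - z) := by
      intro z h1 h2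
      apply clamp_eq
      · nlinarith
      · nlinarith
    have hterm : clamp 0 (δ ℓstar) (q ℓstar * (1 - ζ y₁))
        - clamp 0 (δ ℓstar) (q ℓstar * (1 - ζ y₂)) = q ℓstar * (ζ y₂ - ζ y₁) := by
      rw [hstar _ hz1l hz1u, hstar _ hz2l hz2u]; ring
    calc q ℓstar * (ζ y₂ - ζ y₁)
        = clamp 0 (δ ℓstar) (q ℓstar * (1 - ζ y₁))
          - clamp 0 (δ ℓstar) (q ℓstar * (1 - ζ y₂)) := hterm.symm
      _ ≤ ∑ ℓ, (clamp 0 (δ ℓ) (q ℓ * (1 - ζ y₁)) - clamp 0 (δ ℓ) (q ℓ * (1 - ζ y₂))) := by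
          apply Finset.single_le_sum (f := fun ℓ =>
            clamp 0 (δ ℓ) (q ℓ * (1 - ζ y₁)) - clamp 0 (δ ℓ) (q ℓ * (1 - ζ y₂)))
          · intro ℓ _
            have : q ℓ * (1 - ζ y₂) ≤ q ℓ * (1 - ζ y₁) := by nlinarith [hq ℓ]
            linarith [clamp_mono 0 (δ ℓ) this]
          · exact Finset.mem_univ ℓstar
  intro y₁ hy₁ y₂ hy₂
  rw [le_div_iff₀ hq0]
  rcases le_total (ζ y₁) (ζ y₂) with h | h
  · have := key y₁ hy₁ y₂ hy₂ h
    have h1 : |ζ y₁ - ζ y₂| = ζ y₂ - ζ y₁ := by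
      rw [abs_sub_comm]; exact abs_of_nonneg (by linarith)
    have h2 : y₁ - y₂ ≤ |y₁ - y₂| := le_abs_self _
    nlinarith
  · have := key y₂ hy₂ y₁ hy₁ h
    have h1 : |ζ y₁ - ζ y₂| = ζ y₁ - ζ y₂ := abs_of_nonneg (by linarith)
    have h2 : y₂ - y₁ ≤ |y₁ - y₂| := by rw [abs_sub_comm]; exact le_abs_self _
    nlinarith
end

section
/- Let L be a finite nonempty index set, for each ℓ ∈ L let q_ℓ > 0 and 0 ≤ δ_ℓ ≤ q_ℓ with M = max_{ℓ∈L} δ_ℓ/q_ℓ > 0, and let σ ≥ 0. Consider the problem of maximizing Z(q) = Σ_{ℓ∈L} (q_ℓ' − (q_ℓ')²/(2 q_ℓ)) over vectors q' = (q_ℓ')_{ℓ∈L} subject to 0 ≤ q_ℓ' ≤ δ_ℓ for all ℓ and Σ_{ℓ∈L} q_ℓ' ≤ σ. Then this problem has a unique maximizer q*, the maximizer satisfies Σ_{ℓ∈L} q*_ℓ = min(σ, Σ_{ℓ∈L} δ_ℓ), and q*_ℓ = P_{[0,δ_ℓ]}(q_ℓ·(1−ζ*)) for all ℓ, where ζ*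 is the unique point of [1 − M, 1] satisfying Σ_{ℓ∈L} P_{[0,δ_ℓ]}(q_ℓ·(1−ζ*)) = min(σ, Σ_{ℓ∈L} δ_ℓ). -/
/-- The feasible set of the merge flow-optimisation problem: box constraints `0 ≤ q' ℓ ≤ δ ℓ`
and the aggregate supply constraint `∑ ℓ, q' ℓ ≤ σ`. -/
def feasSet {L : Type*} [Fintype L] (δ : L → ℝ) (σ : ℝ) : Set (L → ℝ) :=
  {q' | (∀ ℓ, 0 ≤ q' ℓ ∧ q' ℓ ≤ δ ℓ) ∧ (∑ ℓ, q' ℓ) ≤ σ}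

/-- The strictly concave quadratic objective of the flow-optimisation merge model. -/
noncomputable def mergeObj {L : Type*} [Fintype L] (q : L → ℝ) (q' : L → ℝ) : ℝ :=
  ∑ ℓ, (q' ℓ - (q' ℓ) ^ 2 / (2 * q ℓ))

/-- Pointwise concavity/KKT inequality for a single coordinate. -/
lemma pointwise_key (a d z t : ℝ) (ha : 0 < a) (hd0 : 0 ≤ d) (hz1 : z ≤ 1)
    (htd : t ≤ d) :
    t - t^2/(2*a) ≤ (clamp 0 d (a*(1-z)) - (clamp 0 d (a*(1-z)))^2/(2*a))
      + z*(t - clamp 0 d (a*(1-z))) - (t - clamp 0 d (a*(1-z)))^2/(2*a) := by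
  have hx : clamp 0 d (a*(1-z)) = min d (a*(1-z)) := by
    unfold clamp
    exact max_eq_right (le_min hd0 (by nlinarith))
  rw [hx, ← sub_nonneg]
  rcases min_cases d (a*(1-z)) with ⟨h1,h2⟩|⟨h1,h2⟩ <;> rw [h1]
  · have key : d - d ^ 2 / (2 * a) + z * (t - d) - (t - d) ^ 2 / (2 * a) - (t - t ^ 2 / (2 * a))
        = ((a*(1-z) - d) * (d - t) + 0) / a := by
      field_simp
      ring
    rw [key, add_zero]
    exact div_nonneg (mul_nonneg (by linarith) (by linarith)) ha.le
  · have key : a*(1-z) - (a*(1-z)) ^ 2 / (2 * a) + z * (t - a*(1-z)) - (t - a*(1-z)) ^ 2 / (2 * a)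
        - (t - t ^ 2 / (2 * a)) = 0 := by
      field_simp
      ring
    rw [key]

/-- The flow-optimisation merge problem has a unique maximizer `q*`;
it satisfies `∑ ℓ, q* ℓ = min σ (∑ ℓ, δ ℓ)` and `q* ℓ = P_{[0,δ ℓ]}(q ℓ · (1 - ζ*))`,
where `ζ*` is the unique point of `[1 - M, 1]` with
`∑ ℓ, P_{[0,δ ℓ]}(q ℓ · (1 - ζ*)) = min σ (∑ ℓ, δ ℓ)`. -/
theorem stmt5 {L : Type*} [Fintype L] [Nonempty L]
    (q δ : L → ℝ) (hq : ∀ ℓ, 0 < q ℓ) (hδ0 : ∀ ℓ, 0 ≤ δ ℓ) (hδq : ∀ ℓ, δ ℓ ≤ q ℓ)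
    (hM : 0 < Finset.univ.sup' Finset.univ_nonempty (fun ℓ => δ ℓ / q ℓ))
    (σ : ℝ) (hσ : 0 ≤ σ)
    (ζstar : ℝ)
    (hζmem : ζstar ∈
      Set.Icc (1 - Finset.univ.sup' Finset.univ_nonempty (fun ℓ => δ ℓ / q ℓ)) 1)
    (hζeq : (∑ ℓ, clamp 0 (δ ℓ) (q ℓ * (1 - ζstar))) = min σ (∑ ℓ, δ ℓ)) :
    (fun ℓ => clamp 0 (δ ℓ) (q ℓ * (1 - ζstar))) ∈ feasSet δ σ ∧
    IsMaxOn (mergeObj q) (feasSet δ σ) (fun ℓ => clamp 0 (δ ℓ) (q ℓ * (1 - ζstar))) ∧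
    (∑ ℓ, clamp 0 (δ ℓ) (q ℓ * (1 - ζstar))) = min σ (∑ ℓ, δ ℓ) ∧
    ∀ q' ∈ feasSet δ σ, IsMaxOn (mergeObj q) (feasSet δ σ) q' →
      q' = fun ℓ => clamp 0 (δ ℓ) (q ℓ * (1 - ζstar)) := by
  set x : L → ℝ := fun ℓ => clamp 0 (δ ℓ) (q ℓ * (1 - ζstar)) with hxdef
  have hζ1 : ζstar ≤ 1 := hζmem.2
  have hMle : Finset.univ.sup' Finset.univ_nonempty (fun ℓ => δ ℓ / q ℓ) ≤ 1 :=
    Finset.sup'_le _ _ (fun ℓ _ => (div_le_one (hq ℓ)).mpr (hδq ℓ))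
  have hζ0 : 0 ≤ ζstar := by
    have := hζmem.1; linarith
  -- box constraints for x
  have hxbox : ∀ ℓ, 0 ≤ x ℓ ∧ x ℓ ≤ δ ℓ := by
    intro ℓ
    constructor
    · exact le_max_left _ _
    · exact max_le (hδ0 ℓ) (min_le_left _ _)
  have hfeas : x ∈ feasSet δ σ := by
    refine ⟨hxbox, ?_⟩
    rw [hxdef]
    simp only []
    rw [hζeq]
    exact min_le_left _ _
  -- key summed inequality
  have key : ∀ q' : L → ℝ, (∀ ℓ, 0 ≤ q' ℓ ∧ q' ℓ ≤ δ ℓ) →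
      mergeObj q q' + ∑ ℓ, (q' ℓ - x ℓ)^2/(2*q ℓ)
        ≤ mergeObj q x + ζstar * ((∑ ℓ, q' ℓ) - ∑ ℓ, x ℓ) := by
    intro q' hbox
    have hrw : ζstar * ((∑ ℓ, q' ℓ) - ∑ ℓ, x ℓ) = ∑ ℓ, ζstar * (q' ℓ - x ℓ) := by
      rw [← Finset.sum_sub_distrib, Finset.mul_sum]
    rw [hrw]
    unfold mergeObj
    rw [← Finset.sum_add_distrib, ← Finset.sum_add_distrib]
    apply Finset.sum_le_sum
    intro ℓ _
    have h := pointwise_key (q ℓ) (δ ℓ) ζstar (q' ℓ) (hq ℓ) (hδ0 ℓ) hζ1 (hbox ℓ).2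
    linarith
  have hsumx : (∑ ℓ, x ℓ) = min σ (∑ ℓ, δ ℓ) := hζeq
  have hS : ∀ q' : L → ℝ, 0 ≤ ∑ ℓ, (q' ℓ - x ℓ)^2/(2*q ℓ) := by
    intro q'
    apply Finset.sum_nonneg
    intro ℓ _
    have := hq ℓ
    positivity
  have hmaxx : IsMaxOn (mergeObj q) (feasSet δ σ) x := by
    rw [isMaxOn_iff]
    intro y hy
    have hy1 : ∀ ℓ, 0 ≤ y ℓ ∧ y ℓ ≤ δ ℓ := hy.1
    have hysum : (∑ ℓ, y ℓ) ≤ ∑ ℓ, x ℓ := by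
      rw [hsumx]
      exact le_min hy.2 (Finset.sum_le_sum (fun ℓ _ => (hy1 ℓ).2))
    have h1 := key y hy1
    have h2 := hS y
    nlinarith [mul_nonneg hζ0 (sub_nonneg.mpr hysum)]
  refine ⟨hfeas, hmaxx, hsumx, ?_⟩
  intro q' hq' hmax
  have h1 := key q' hq'.1
  have h2 : mergeObj q x ≤ mergeObj q q' := hmax hfeas
  have h3 : mergeObj q q' ≤ mergeObj q x := hmaxx hq'
  have hqsum : (∑ ℓ, q' ℓ) ≤ ∑ ℓ, x ℓ := by
    rw [hsumx]
    exact le_min hq'.2 (Finset.sum_le_sum (fun ℓ _ => (hq'.1 ℓ).2))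
  have hSle : (∑ ℓ, (q' ℓ - x ℓ)^2/(2*q ℓ)) ≤ 0 := by
    nlinarith [mul_nonneg hζ0 (sub_nonneg.mpr hqsum)]
  have hS0 : (∑ ℓ, (q' ℓ - x ℓ)^2/(2*q ℓ)) = 0 := le_antisymm hSle (hS q')
  have hallzero := (Finset.sum_eq_zero_iff_of_nonneg
    (fun ℓ _ => by have := hq ℓ; positivity)).mp hS0
  funext ℓ
  have h := hallzero ℓ (Finset.mem_univ ℓ)
  have hqℓ := hq ℓ
  have hsq : (q' ℓ - x ℓ)^2 = 0 := by
    rcases div_eq_zero_iff.mp h with h' | h'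
    · exact h'
    · linarith
  have : q' ℓ - x ℓ = 0 := by
    nlinarith [sq_nonneg (q' ℓ - x ℓ)]
  have : q' ℓ = x ℓ := by linarith
  simpa [hxdef] using this
end

section
/- Consider a merge with two inflows: let q₁, q₂ > 0 be the two maximum flows, let 0 ≤ δ₁ ≤ q₁ and 0 ≤ δ₂ ≤ q₂ be the two demands with δ₁ + δ₂ > 0, and let σ ≥ 0 be the downstream supply with σ ≤ δ₁ + δ₂. Let (q*₁, q*₂) be the unique maximizer of (q₁' − (q₁')²/(2q₁)) + (q₂' − (q₂')²/(2q₂)) over {0 ≤ q₁' ≤ δ₁, 0 ≤ q₂' ≤ δ₂, q₁' + q₂' ≤ σ}. Then, writing p_i = q_i/(q₁ + q₂), the maximizer is given by Daganzo's merge rule: q*₁ = min(δ₁, max(σ − δ₂, p₁·σ)) and q*₂ = min(δ₂, max(σ − δ₁, p₂·σ)). -/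
/-- For a merge with two inflows of capacities `q1, q2 > 0`, demands
`0 ≤ δ1 ≤ q1`, `0 ≤ δ2 ≤ q2` with `δ1 + δ2 > 0`, and downstream supply `0 ≤ σ ≤ δ1 + δ2`,
the unique maximizer `(qs1, qs2)` of the concave quadratic objective over the feasible set
is given by Daganzo's merge rule with `p_i = q_i / (q1 + q2)`. -/
theorem stmt6 (q1 q2 δ1 δ2 σ qs1 qs2 : ℝ)
    (hq1 : 0 < q1) (hq2 : 0 < q2)
    (hδ1 : 0 ≤ δ1) (hδ1q : δ1 ≤ q1) (hδ2 : 0 ≤ δ2) (hδ2q : δ2 ≤ q2)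
    (hδpos : 0 < δ1 + δ2) (hσ0 : 0 ≤ σ) (hσle : σ ≤ δ1 + δ2)
    (hfeas : 0 ≤ qs1 ∧ qs1 ≤ δ1 ∧ 0 ≤ qs2 ∧ qs2 ≤ δ2 ∧ qs1 + qs2 ≤ σ)
    (hmax : ∀ a b : ℝ, 0 ≤ a → a ≤ δ1 → 0 ≤ b → b ≤ δ2 → a + b ≤ σ →
      (a - a ^ 2 / (2 * q1)) + (b - b ^ 2 / (2 * q2)) ≤
        (qs1 - qs1 ^ 2 / (2 * q1)) + (qs2 - qs2 ^ 2 / (2 * q2))) :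
    qs1 = min δ1 (max (σ - δ2) (q1 / (q1 + q2) * σ)) ∧
    qs2 = min δ2 (max (σ - δ1) (q2 / (q1 + q2) * σ)) := by
  obtain ⟨hf1, hf2, hf3, hf4, hf5⟩ := hfeas
  have hs : 0 < q1 + q2 := by linarith
  have hsne : q1 + q2 ≠ 0 := ne_of_gt hs
  set A := min δ1 (max (σ - δ2) (q1 / (q1 + q2) * σ)) with hA
  set B := min δ2 (max (σ - δ1) (q2 / (q1 + q2) * σ)) with hB
  clear_value A B
  have hid : q1 / (q1 + q2) * σ + q2 / (q1 + q2) * σ = σ := by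
    field_simp
  have hp1 : 0 ≤ q1 / (q1 + q2) * σ := by positivity
  have hp2 : 0 ≤ q2 / (q1 + q2) * σ := by positivity
  have hmain : 0 ≤ A ∧ A ≤ δ1 ∧ 0 ≤ B ∧ B ≤ δ2 ∧ A + B = σ ∧
      (q1 - A) * q2 * (qs1 - A) + (q2 - B) * q1 * (qs2 - B) ≤ 0 := by
    rcases le_or_gt (q1 / (q1 + q2) * σ) δ1 with hc1 | hc1
    · rcases le_or_gt (q2 / (q1 + q2) * σ) δ2 with hc2 | hc2
      · -- both proportional shares feasible
        have hA' : A = q1 / (q1 + q2) * σ := by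
          rw [hA, max_eq_right (by linarith), min_eq_right hc1]
        have hB' : B = q2 / (q1 + q2) * σ := by
          rw [hB, max_eq_right (by linarith), min_eq_right hc2]
        refine ⟨by rw [hA']; exact hp1, by rw [hA']; exact hc1,
          by rw [hB']; exact hp2, by rw [hB']; exact hc2, by rw [hA', hB']; exact hid, ?_⟩
        have e : (q1 - A) * q2 * (qs1 - A) + (q2 - B) * q1 * (qs2 - B)
            = q1 * q2 * ((q1 + q2 - σ) / (q1 + q2)) * (qs1 + qs2 - σ) := by
          rw [hA', hB']; field_simp; ring
        rw [e]
        apply mul_nonpos_of_nonneg_of_nonpos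
        · have : 0 ≤ q1 + q2 - σ := by linarith
          positivity
        · linarith
      · -- proportional share of 2 exceeds δ2 : A = σ - δ2, B = δ2
        have hc2' : δ2 * (q1 + q2) < q2 * σ := by
          rw [div_mul_eq_mul_div, lt_div_iff₀ hs] at hc2; linarith
        have hA' : A = σ - δ2 := by
          have h1 : q1 / (q1 + q2) * σ ≤ σ - δ2 := by
            rw [div_mul_eq_mul_div, div_le_iff₀ hs]; nlinarith
          rw [hA, max_eq_left h1, min_eq_right (by linarith)]
        have hB' : B = δ2 := by
          rw [hB]; exact min_eq_left (le_trans (le_of_lt hc2) (le_max_right _ _))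
        refine ⟨by rw [hA']; linarith, by rw [hA']; linarith,
          by rw [hB']; exact hδ2, by rw [hB'], by rw [hA', hB']; ring, ?_⟩
        rw [hA', hB']
        nlinarith [mul_nonneg (show (0:ℝ) ≤ q2 * σ - δ2 * (q1 + q2) by linarith)
            (show (0:ℝ) ≤ δ2 - qs2 by linarith),
          mul_nonneg (mul_nonneg (show (0:ℝ) ≤ q1 - σ + δ2 by linarith) hq2.le)
            (show (0:ℝ) ≤ σ - qs1 - qs2 by linarith)]
    · -- proportional share of 1 exceeds δ1 : A = δ1, B = σ - δ1
      have hc1' : δ1 * (q1 + q2) < q1 * σ := by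
        rw [div_mul_eq_mul_div, lt_div_iff₀ hs] at hc1; linarith
      have hA' : A = δ1 := by
        rw [hA]; exact min_eq_left (le_trans (le_of_lt hc1) (le_max_right _ _))
      have hB' : B = σ - δ1 := by
        have h1 : q2 / (q1 + q2) * σ ≤ σ - δ1 := by
          rw [div_mul_eq_mul_div, div_le_iff₀ hs]; nlinarith
        rw [hB, max_eq_left h1, min_eq_right (by linarith)]
      refine ⟨by rw [hA']; exact hδ1, by rw [hA'],
        by rw [hB']; linarith, by rw [hB']; linarith, by rw [hA', hB']; ring, ?_⟩
      rw [hA', hB']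
      nlinarith [mul_nonneg (show (0:ℝ) ≤ q1 * σ - δ1 * (q1 + q2) by linarith)
          (show (0:ℝ) ≤ δ1 - qs1 by linarith),
        mul_nonneg (mul_nonneg (show (0:ℝ) ≤ q2 - σ + δ1 by linarith) hq1.le)
          (show (0:ℝ) ≤ σ - qs1 - qs2 by linarith)]
  obtain ⟨hA0, hAd, hB0, hBd, hABσ, hkkt⟩ := hmain
  have hobj := hmax A B hA0 hAd hB0 hBd (by linarith)
  have hobj3 : 2 * q1 * q2 * A - A ^ 2 * q2 + 2 * q1 * q2 * B - B ^ 2 * q1 ≤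
      2 * q1 * q2 * qs1 - qs1 ^ 2 * q2 + 2 * q1 * q2 * qs2 - qs2 ^ 2 * q1 := by
    have h := mul_le_mul_of_nonneg_right hobj (by positivity : (0:ℝ) ≤ 2 * q1 * q2)
    have e1 : ((A - A ^ 2 / (2 * q1)) + (B - B ^ 2 / (2 * q2))) * (2 * q1 * q2)
        = 2 * q1 * q2 * A - A ^ 2 * q2 + 2 * q1 * q2 * B - B ^ 2 * q1 := by
      field_simp; ring
    have e2 : ((qs1 - qs1 ^ 2 / (2 * q1)) + (qs2 - qs2 ^ 2 / (2 * q2))) * (2 * q1 * q2)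
        = 2 * q1 * q2 * qs1 - qs1 ^ 2 * q2 + 2 * q1 * q2 * qs2 - qs2 ^ 2 * q1 := by
      field_simp; ring
    rw [e1, e2] at h; exact h
  have key : (qs1 - A) ^ 2 * q2 + (qs2 - B) ^ 2 * q1 ≤ 0 := by
    have h := hkkt
    ring_nf at h hobj3 ⊢
    linarith
  clear hmax hobj hobj3 hkkt
  have t1 : (qs1 - A) ^ 2 ≤ 0 := by
    have h2' : 0 ≤ (qs2 - B) ^ 2 * q1 := by positivity
    have t : (qs1 - A) ^ 2 * q2 ≤ 0 * q2 := by linarith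
    exact le_of_mul_le_mul_right t hq2
  have t2 : (qs2 - B) ^ 2 ≤ 0 := by
    have h1' : 0 ≤ (qs1 - A) ^ 2 * q2 := by positivity
    have t : (qs2 - B) ^ 2 * q1 ≤ 0 * q1 := by linarith
    exact le_of_mul_le_mul_right t hq1
  have e1 : qs1 = A :=
    sub_eq_zero.mp ((pow_eq_zero_iff two_ne_zero).mp (le_antisymm t1 (sq_nonneg _)))
  have e2 : qs2 = B :=
    sub_eq_zero.mp ((pow_eq_zero_iff two_ne_zero).mp (le_antisymm t2 (sq_nonneg _)))
  exact ⟨e1, e2⟩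
end

section
/- Let F ≥ 1, let g₁, …, g_F be real numbers, and let c > 0. Then there exists a unique real number ζ such that Σ_{j=1}^{F} max(0, g_j + ζ) = c. -/
/-- For `F ≥ 1`, reals `g 1, …, g F`, and `c > 0`, there exists a unique real
`ζ` with `∑ j, max 0 (g j + ζ) = c`. -/
theorem stmt8 (F : ℕ) (hF : 1 ≤ F) (g : Fin F → ℝ) (c : ℝ) (hc : 0 < c) :
    ∃! ζ : ℝ, (∑ j, max 0 (g j + ζ)) = c := by
  haveI : Nonempty (Fin F) := ⟨⟨0, hF⟩⟩
  set ξ : ℝ → ℝ := fun ζ => ∑ j, max 0 (g j + ζ) with hξ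
  have hcont : Continuous ξ := by
    apply continuous_finset_sum
    intro j _
    exact continuous_const.max (continuous_const.add continuous_id)
  have hstrict : ∀ a b : ℝ, a < b → 0 < ξ a → ξ a < ξ b := by
    intro a b hab hpos
    obtain ⟨j, hj⟩ : ∃ j, 0 < g j + a := by
      by_contra h
      push_neg at h
      have : ξ a = 0 := Finset.sum_eq_zero (fun j _ => max_eq_left (h j))
      linarith
    apply Finset.sum_lt_sum
    · intro i _
      exact max_le_max le_rfl (by linarith)
    · refine ⟨j, Finset.mem_univ j, ?_⟩
      rw [max_eq_right hj.le, max_eq_right (by linarith : (0:ℝ) ≤ g j + b)]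
      linarith
  set M : ℝ := Finset.univ.sup' Finset.univ_nonempty g with hM
  set m : ℝ := Finset.univ.inf' Finset.univ_nonempty g with hm
  have hmM : m ≤ M := le_trans (Finset.inf'_le _ (Finset.mem_univ (Classical.arbitrary _)))
    (Finset.le_sup' _ (Finset.mem_univ (Classical.arbitrary _)))
  have ha : ξ (-M) = 0 := by
    apply Finset.sum_eq_zero
    intro j _
    apply max_eq_left
    have : g j ≤ M := Finset.le_sup' g (Finset.mem_univ j)
    linarith
  have hb : c ≤ ξ (c - m) := by
    have h1 : ∀ j ∈ Finset.univ, c ≤ max 0 (g j + (c - m)) := by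
      intro j _
      have : m ≤ g j := Finset.inf'_le g (Finset.mem_univ j)
      have h2 : c ≤ g j + (c - m) := by linarith
      exact le_trans h2 (le_max_right _ _)
    calc c = ∑ _j : Fin F, c / F := by
            rw [Finset.sum_const, Finset.card_univ, Fintype.card_fin, nsmul_eq_mul]
            field_simp
      _ ≤ ∑ j, max 0 (g j + (c - m)) := by
            apply Finset.sum_le_sum
            intro j hj
            calc c / F ≤ c := by
                  have hF' : (1:ℝ) ≤ F := by exact_mod_cast hF
                  rw [div_le_iff₀ (by linarith)]
                  nlinarith
              _ ≤ _ := h1 j hj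
  have hab : (-M : ℝ) ≤ c - m := by linarith
  obtain ⟨ζ, hζmem, hζ⟩ : ∃ ζ ∈ Set.Icc (-M) (c - m), ξ ζ = c := by
    have := intermediate_value_Icc hab hcont.continuousOn
    exact this ⟨by rw [ha]; exact hc.le, hb⟩
  refine ⟨ζ, hζ, ?_⟩
  intro y hy
  have hy' : ξ y = c := hy
  by_contra hne
  rcases lt_or_gt_of_ne hne with h | h
  · have := hstrict y ζ h (by rw [hy']; exact hc)
    rw [hy', hζ] at this; exact lt_irrefl _ this
  · have := hstrict ζ y h (by rw [hζ]; exact hc)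
    rw [hy', hζ] at this; exact lt_irrefl _ this
end

section
/- Let F ≥ 2 and let g₁ ≥ g₂ ≥ … ≥ g_F be real numbers (so the cut values −g₁ ≤ −g₂ ≤ … ≤ −g_F are in increasing order), and define ξ(ζ) = Σ_{j=1}^{F} max(0, g_j + ζ). Suppose ℓ ∈ {1, …, F−1} satisfies ξ(−g_ℓ) ≤ 1 < ξ(−g_{ℓ+1}). Then the number ζ* = −g_ℓ + (1 − ξ(−g_ℓ))/ℓ satisfies ξ(ζ*) = 1. -/
/-- Let `F ≥ 2`, `g 1 ≥ g 2 ≥ … ≥ g F` (1-based indexing) and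
`ξ ζ = ∑_{j=1}^{F} max 0 (g j + ζ)`. If `ℓ ∈ {1, …, F-1}` satisfies
`ξ (-g ℓ) ≤ 1 < ξ (-g (ℓ+1))`, then `ζ* = -g ℓ + (1 - ξ (-g ℓ)) / ℓ` satisfies
`ξ ζ* = 1`. -/
theorem stmt10 (F : ℕ) (hF : 2 ≤ F) (g : ℕ → ℝ)
    (hsort : ∀ i j, 1 ≤ i → i ≤ j → j ≤ F → g j ≤ g i)
    (ℓ : ℕ) (hℓ1 : 1 ≤ ℓ) (hℓF : ℓ + 1 ≤ F)
    (h1 : (∑ j ∈ Finset.Icc 1 F, max 0 (g j + (-(g ℓ)))) ≤ 1)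
    (h2 : 1 < ∑ j ∈ Finset.Icc 1 F, max 0 (g j + (-(g (ℓ + 1))))) :
    (∑ j ∈ Finset.Icc 1 F,
        max 0 (g j + (-(g ℓ) + (1 - ∑ i ∈ Finset.Icc 1 F, max 0 (g i + (-(g ℓ)))) / ℓ))) = 1 := by
  have hℓ0 : (0:ℝ) < (ℓ:ℝ) := by exact_mod_cast hℓ1
  set S := ∑ i ∈ Finset.Icc 1 F, max 0 (g i + (-(g ℓ))) with hSdef
  set δ := (1 - S) / (ℓ:ℝ) with hδdef
  have hIcc : Finset.Icc 1 F = Finset.Ioc 0 F := Finset.Icc_add_one_left_eq_Ioc 0 F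
  have hsplit : ∀ f : ℕ → ℝ, ∑ j ∈ Finset.Ioc 0 F, f j
      = ∑ j ∈ Finset.Ioc 0 ℓ, f j + ∑ j ∈ Finset.Ioc ℓ F, f j :=
    fun f => (Finset.sum_Ioc_consecutive f (Nat.zero_le ℓ) (by omega)).symm
  -- value of S
  have hS1 : S = ∑ j ∈ Finset.Ioc 0 ℓ, (g j - g ℓ) := by
    rw [hSdef, hIcc, hsplit]
    have h0 : ∑ j ∈ Finset.Ioc ℓ F, max 0 (g j + (-(g ℓ))) = 0 := by
      apply Finset.sum_eq_zero
      intro j hj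
      simp only [Finset.mem_Ioc] at hj
      have := hsort ℓ j (by omega) (by omega) hj.2
      exact max_eq_left (by linarith)
    rw [h0, add_zero]
    apply Finset.sum_congr rfl
    intro j hj
    simp only [Finset.mem_Ioc] at hj
    have := hsort j ℓ (by omega) hj.2 (by omega)
    rw [max_eq_right (by linarith)]; ring
  -- value of ξ(-g (ℓ+1))
  have hT : (∑ j ∈ Finset.Icc 1 F, max 0 (g j + (-(g (ℓ + 1)))))
      = S + (ℓ:ℝ) * (g ℓ - g (ℓ + 1)) := by
    rw [hIcc, hsplit]
    have h0 : ∑ j ∈ Finset.Ioc ℓ F, max 0 (g j + (-(g (ℓ+1)))) = 0 := by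
      apply Finset.sum_eq_zero
      intro j hj
      simp only [Finset.mem_Ioc] at hj
      have := hsort (ℓ+1) j (by omega) (by omega) hj.2
      exact max_eq_left (by linarith)
    rw [h0, add_zero]
    have h1' : ∑ j ∈ Finset.Ioc 0 ℓ, max 0 (g j + (-(g (ℓ+1))))
        = ∑ j ∈ Finset.Ioc 0 ℓ, ((g j - g ℓ) + (g ℓ - g (ℓ+1))) := by
      apply Finset.sum_congr rfl
      intro j hj
      simp only [Finset.mem_Ioc] at hj
      have h2' := hsort j ℓ (by omega) hj.2 (by omega)
      have h3' := hsort ℓ (ℓ+1) (by omega) (by omega) (by omega)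
      rw [max_eq_right (by linarith)]; ring
    rw [h1', Finset.sum_add_distrib, Finset.sum_const, ← hS1]
    simp [Nat.card_Ioc]
  have hδlt : δ < g ℓ - g (ℓ + 1) := by
    rw [hδdef, div_lt_iff₀ hℓ0]
    rw [hT] at h2
    nlinarith
  have hδ0 : 0 ≤ δ := div_nonneg (by linarith) hℓ0.le
  -- final computation
  rw [hIcc, hsplit]
  have h0 : ∑ j ∈ Finset.Ioc ℓ F, max 0 (g j + (-(g ℓ) + δ)) = 0 := by
    apply Finset.sum_eq_zero
    intro j hj
    simp only [Finset.mem_Ioc] at hj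
    have := hsort (ℓ+1) j (by omega) (by omega) hj.2
    exact max_eq_left (by linarith)
  rw [h0, add_zero]
  have h1' : ∑ j ∈ Finset.Ioc 0 ℓ, max 0 (g j + (-(g ℓ) + δ))
      = ∑ j ∈ Finset.Ioc 0 ℓ, ((g j - g ℓ) + δ) := by
    apply Finset.sum_congr rfl
    intro j hj
    simp only [Finset.mem_Ioc] at hj
    have := hsort j ℓ (by omega) hj.2 (by omega)
    rw [max_eq_right (by linarith)]; ring
  rw [h1', Finset.sum_add_distrib, Finset.sum_const, ← hS1]
  simp only [Nat.card_Ioc, Nat.sub_zero, nsmul_eq_mul]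
  rw [hδdef]
  field_simp
  ring
end

section
/- Let K ≥ 1, let X = ℝⁿ (state space) and B = ℝᵐ (control space). For k = 0, …, K−1 let E_k : X × B → X and g_k : X × B → ℝ be continuously differentiable, and let g_K : X → ℝ be continuously differentiable. Fix an initial state N₀ ∈ X, and for a control sequence β = (β₀, …, β_{K−1}) ∈ B^K define the trajectory by N_{k+1}(β) = E_k(N_k(β), β_k), and the cost J(β) = Σ_{k=0}^{K−1} g_k(N_k(β), β_k) + g_K(N_K(β)). Define the adjoint covectors (continuous linear functionals on X) by the backward recursion Υ_K = Dg_K(N_K), and Υ_k = D_N g_k(N_k, β_k) + Υ_{k+1} ∘ D_N E_k(N_k, β_k) for k = K−1, …, 0, where D_N denotes the partial Fréchet derivative in the state argument. Then for each k ∈ {0, …, K−1}, the map β_k ↦ J(β) (with the other controls held fixed) is differentiable and its Fréchet derivative at β_k equals D_β g_k(N_k, β_k) + Υ_{k+1} ∘ D_β E_k(N_k, β_k), where D_β denotes the partial Fréchet derivative in the control argument. -/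
/-- The state trajectory of the discrete-time control system `N_{k+1} = E_k (N_k, β_k)`
started from the initial state `N0`. -/
def traj {X B : Type*} (E : ℕ → X → B → X) (N0 : X) (β : ℕ → B) : ℕ → X
  | 0 => N0
  | k + 1 => E k (traj E N0 β k) (β k)

/-- The finite-horizon optimal control criterion: sum of stage costs plus terminal cost. -/
noncomputable def cost {X B : Type*} (K : ℕ) (E : ℕ → X → B → X)
    (g : ℕ → X → B → ℝ) (gK : X → ℝ) (N0 : X) (β : ℕ → B) : ℝ :=
  (∑ k ∈ Finset.range K, g k (traj E N0 β k) (β k)) + gK (traj E N0 β K)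

section Aux

variable {X B : Type*}

/-- Tail cost with `fuel` remaining steps starting at step `l` from state `x`. -/
noncomputable def tailAux (E : ℕ → X → B → X) (g : ℕ → X → B → ℝ) (gK : X → ℝ)
    (β : ℕ → B) : ℕ → ℕ → X → ℝ
  | 0, _, x => gK x
  | f + 1, l, x => g l x (β l) + tailAux E g gK β f (l + 1) (E l x (β l))

lemma traj_update_eq (E : ℕ → X → B → X) (N0 : X) (β : ℕ → B) (k : ℕ) (b : B) :
    ∀ j ≤ k, traj E N0 (Function.update β k b) j = traj E N0 β j := by
  intro j hj
  induction j with
  | zero => rfl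
  | succ i ih =>
    have hik : i < k := hj
    simp [traj, ih (le_of_lt hik), Function.update_of_ne (Nat.ne_of_lt hik)]

lemma tailAux_eq_sum (E : ℕ → X → B → X) (g : ℕ → X → B → ℝ) (gK : X → ℝ)
    (β β' : ℕ → B) (N0 : X) :
    ∀ f l, (∀ j, l ≤ j → β' j = β j) →
      tailAux E g gK β f l (traj E N0 β' l) =
        (∑ j ∈ Finset.Ico l (l + f), g j (traj E N0 β' j) (β j)) +
          gK (traj E N0 β' (l + f)) := by
  intro f
  induction f with
  | zero => intro l h; simp [tailAux]
  | succ f ih =>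
    intro l h
    have h1 : traj E N0 β' (l + 1) = E l (traj E N0 β' l) (β l) := by
      simp [traj, h l le_rfl]
    have h2 := ih (l + 1) (fun j hj => h j (by omega))
    show g l (traj E N0 β' l) (β l) +
        tailAux E g gK β f (l + 1) (E l (traj E N0 β' l) (β l)) = _
    rw [← h1, h2, Finset.sum_eq_sum_Ico_succ_bot (show l < l + (f + 1) by omega)
      (f := fun j => g j (traj E N0 β' j) (β j))]
    have h3 : l + (f + 1) = (l + 1) + f := by omega
    rw [h3]
    ring

end Aux

section Deriv

variable {X B Y : Type*} [NormedAddCommGroup X] [NormedSpace ℝ X]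
  [NormedAddCommGroup B] [NormedSpace ℝ B] [NormedAddCommGroup Y] [NormedSpace ℝ Y]

lemma partial_fst {F : X × B → Y} (hF : ContDiff ℝ 1 F) (b : B) (x : X) :
    HasFDerivAt (fun x => F (x, b)) (fderiv ℝ (fun x => F (x, b)) x) x := by
  have : DifferentiableAt ℝ (fun x => F (x, b)) x :=
    ((hF.differentiable one_ne_zero) (x, b)).comp x
      (differentiableAt_id.prodMk (differentiableAt_const b))
  exact this.hasFDerivAt

lemma partial_snd {F : X × B → Y} (hF : ContDiff ℝ 1 F) (x : X) (b : B) :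
    HasFDerivAt (fun b => F (x, b)) (fderiv ℝ (fun b => F (x, b)) b) b := by
  have : DifferentiableAt ℝ (fun b => F (x, b)) b :=
    ((hF.differentiable one_ne_zero) (x, b)).comp b
      ((differentiableAt_const x).prodMk differentiableAt_id)
  exact this.hasFDerivAt

lemma tailAux_hasFDerivAt (K : ℕ)
    (E : ℕ → X → B → X) (g : ℕ → X → B → ℝ) (gK : X → ℝ)
    (hE : ∀ k < K, ContDiff ℝ 1 (fun p : X × B => E k p.1 p.2))
    (hg : ∀ k < K, ContDiff ℝ 1 (fun p : X × B => g k p.1 p.2))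
    (hgK : ContDiff ℝ 1 gK) (N0 : X) (β : ℕ → B)
    (Υ : ℕ → (X →L[ℝ] ℝ))
    (hΥK : Υ K = fderiv ℝ gK (traj E N0 β K))
    (hΥ : ∀ k < K, Υ k =
      fderiv ℝ (fun x => g k x (β k)) (traj E N0 β k) +
        (Υ (k + 1)).comp (fderiv ℝ (fun x => E k x (β k)) (traj E N0 β k))) :
    ∀ f l, l + f = K →
      HasFDerivAt (tailAux E g gK β f l) (Υ l) (traj E N0 β l) := by
  intro f
  induction f with
  | zero =>
    intro l hl
    simp only [Nat.add_zero] at hl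
    subst hl
    rw [hΥK]
    exact ((hgK.differentiable one_ne_zero) _).hasFDerivAt
  | succ f ih =>
    intro l hl
    have hlK : l < K := by omega
    have ihl := ih (l + 1) (by omega)
    have hgN := partial_fst (hg l hlK) (β l) (traj E N0 β l)
    have hEN := partial_fst (hE l hlK) (β l) (traj E N0 β l)
    have h2 : traj E N0 β (l + 1) = E l (traj E N0 β l) (β l) := rfl
    rw [h2] at ihl
    have hchain := ihl.comp (traj E N0 β l) hEN
    have := hgN.add hchain
    rw [hΥ l hlK]
    exact this

end Deriv

/-- discrete-time adjoint (costate) formula for the gradient of the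
finite-horizon optimal control criterion. With state space `ℝⁿ`, control space `ℝᵐ`,
continuously differentiable dynamics `E_k`, stage costs `g_k` and terminal cost `g_K`,
and adjoint covectors `Υ` defined by the backward recursion
`Υ_K = Dg_K(N_K)`, `Υ_k = D_N g_k(N_k, β_k) + Υ_{k+1} ∘ D_N E_k(N_k, β_k)`,
the partial Fréchet derivative of `J` with respect to the control `β_k` exists and equals
`D_β g_k(N_k, β_k) + Υ_{k+1} ∘ D_β E_k(N_k, β_k)`. -/
theorem stmt14 (n m K : ℕ) (hK : 1 ≤ K)
    (E : ℕ → EuclideanSpace ℝ (Fin n) → EuclideanSpace ℝ (Fin m) → EuclideanSpace ℝ (Fin n))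
    (g : ℕ → EuclideanSpace ℝ (Fin n) → EuclideanSpace ℝ (Fin m) → ℝ)
    (gK : EuclideanSpace ℝ (Fin n) → ℝ)
    (hE : ∀ k < K, ContDiff ℝ 1
      (fun p : EuclideanSpace ℝ (Fin n) × EuclideanSpace ℝ (Fin m) => E k p.1 p.2))
    (hg : ∀ k < K, ContDiff ℝ 1
      (fun p : EuclideanSpace ℝ (Fin n) × EuclideanSpace ℝ (Fin m) => g k p.1 p.2))
    (hgK : ContDiff ℝ 1 gK)
    (N0 : EuclideanSpace ℝ (Fin n)) (β : ℕ → EuclideanSpace ℝ (Fin m))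
    (Υ : ℕ → (EuclideanSpace ℝ (Fin n) →L[ℝ] ℝ))
    (hΥK : Υ K = fderiv ℝ gK (traj E N0 β K))
    (hΥ : ∀ k < K, Υ k =
      fderiv ℝ (fun x => g k x (β k)) (traj E N0 β k) +
        (Υ (k + 1)).comp (fderiv ℝ (fun x => E k x (β k)) (traj E N0 β k))) :
    ∀ k < K, HasFDerivAt
      (fun b => cost K E g gK N0 (Function.update β k b))
      (fderiv ℝ (fun b => g k (traj E N0 β k) b) (β k) +
        (Υ (k + 1)).comp (fderiv ℝ (fun b => E k (traj E N0 β k) b) (β k)))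
      (β k) := by
  intro k hk
  -- rewrite the cost as a function of b
  have hcost : ∀ b, cost K E g gK N0 (Function.update β k b) =
      (∑ j ∈ Finset.range k, g j (traj E N0 β j) (β j)) +
        (g k (traj E N0 β k) b + tailAux E g gK β (K - (k + 1)) (k + 1) (E k (traj E N0 β k) b)) := by
    intro b
    have hβ'eq : ∀ j, k + 1 ≤ j → Function.update β k b j = β j := by
      intro j hj
      exact Function.update_of_ne (by omega) _ _
    have htraj1 : traj E N0 (Function.update β k b) (k + 1) = E k (traj E N0 β k) b := by
      show E k (traj E N0 (Function.update β k b) k) (Function.update β k b k)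
        = E k (traj E N0 β k) b
      rw [traj_update_eq E N0 β k b k le_rfl, Function.update_self]
    have htail := tailAux_eq_sum E g gK β (Function.update β k b) N0 (K - (k + 1)) (k + 1) hβ'eq
    have hKeq : (k + 1) + (K - (k + 1)) = K := by omega
    rw [hKeq, htraj1] at htail
    rw [htail]
    unfold cost
    have hsplit : ∑ j ∈ Finset.range K, g j (traj E N0 (Function.update β k b) j) (Function.update β k b j) =
        (∑ j ∈ Finset.range (k + 1), g j (traj E N0 (Function.update β k b) j) (Function.update β k b j)) +
          ∑ j ∈ Finset.Ico (k + 1) K, g j (traj E N0 (Function.update β k b) j) (Function.update β k b j) := by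
      rw [Finset.range_eq_Ico, Finset.range_eq_Ico]
      exact (Finset.sum_Ico_consecutive (fun j => g j (traj E N0 (Function.update β k b) j) (Function.update β k b j)) (show 0 ≤ k + 1 by omega) (show k + 1 ≤ K by omega)).symm
    rw [hsplit, Finset.sum_range_succ]
    have h1 : ∀ j ∈ Finset.range k, g j (traj E N0 (Function.update β k b) j) (Function.update β k b j)
        = g j (traj E N0 β j) (β j) := by
      intro j hj
      simp only [Finset.mem_range] at hj
      rw [traj_update_eq E N0 β k b j (le_of_lt hj),
        Function.update_of_ne (by omega)]
    have h2 : g k (traj E N0 (Function.update β k b) k) (Function.update β k b k)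
        = g k (traj E N0 β k) b := by
      rw [traj_update_eq E N0 β k b k le_rfl, Function.update_self]
    have h3 : ∀ j ∈ Finset.Ico (k + 1) K, g j (traj E N0 (Function.update β k b) j) (Function.update β k b j)
        = g j (traj E N0 (Function.update β k b) j) (β j) := by
      intro j hj
      simp only [Finset.mem_Ico] at hj
      rw [hβ'eq j hj.1]
    rw [Finset.sum_congr rfl h1, h2, Finset.sum_congr rfl h3]
    ring
  -- derivatives
  have hgB := partial_snd (hg k hk) (traj E N0 β k) (β k)
  have hEB := partial_snd (hE k hk) (traj E N0 β k) (β k)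
  have htailD := tailAux_hasFDerivAt K E g gK hE hg hgK N0 β Υ hΥK hΥ
    (K - (k + 1)) (k + 1) (by omega)
  have htraj : traj E N0 β (k + 1) = E k (traj E N0 β k) (β k) := rfl
  rw [htraj] at htailD
  have hchain := htailD.comp (β k) hEB
  have hsum := (hgB.add hchain).const_add
    (∑ j ∈ Finset.range k, g j (traj E N0 β j) (β j))
  have hfun : (fun b => cost K E g gK N0 (Function.update β k b)) =
      (fun b => (∑ j ∈ Finset.range k, g j (traj E N0 β j) (β j)) +
        (g k (traj E N0 β k) b + tailAux E g gK β (K - (k + 1)) (k + 1) (E k (traj E N0 β k) b))) :=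
    funext hcost
  rw [hfun]
  exact hsum
end
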